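/- Under the ADDA setup, for every k ≥ 0 the iterates Y_k satisfy, in the Loewner order: 0 ≤ Y_k ≤ Y_{k+1} ≤ Y, and moreover 0 ≤ Y − Y_k ≤ (I + Y X)·𝒞(R;α)^{2^k}·Y·𝒞(S;α)^{2^k}. -/

import Mathlib

open Matrix Filter
open scoped Matrix.Norms.L2Operator

set_option maxHeartbeats 1600000

variable {n : ℕ}
local notation "Mat" => Matrix (Fin n) (Fin n) ℝ

lemma mymul_inv {A : Mat} (hA : IsUnit A) : A * A⁻¹ = 1 :=
  Matrix.mul_nonsing_inv A ((Matrix.isUnit_iff_isUnit_det A).mp hA)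

lemma myinv_mul {A : Mat} (hA : IsUnit A) : A⁻¹ * A = 1 :=
  Matrix.nonsing_inv_mul A ((Matrix.isUnit_iff_isUnit_det A).mp hA)

lemma mycancel_left {A B C : Mat} (hA : IsUnit A) (h : A * B = A * C) : B = C := by
  calc B = A⁻¹ * (A * B) := by rw [← Matrix.mul_assoc, myinv_mul hA, Matrix.one_mul]
  _ = A⁻¹ * (A * C) := by rw [h]
  _ = C := by rw [← Matrix.mul_assoc, myinv_mul hA, Matrix.one_mul]

lemma mycancel_right {A B C : Mat} (hA : IsUnit A) (h : B * A = C * A) : B = C := by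
  calc B = B * A * A⁻¹ := by rw [Matrix.mul_assoc, mymul_inv hA, Matrix.mul_one]
  _ = C * A * A⁻¹ := by rw [h]
  _ = C := by rw [Matrix.mul_assoc, mymul_inv hA, Matrix.mul_one]

lemma conjPSD {M : Mat} (hM : M.PosSemidef) (E : Mat) : (E * M * Eᵀ).PosSemidef := by
  have := hM.mul_mul_conjTranspose_same E
  rwa [Matrix.conjTranspose_eq_transpose_of_trivial] at this

lemma transPSD {M : Mat} (hM : M.PosSemidef) (E : Mat) : (Eᵀ * M * E).PosSemidef := by
  have := hM.conjTranspose_mul_mul_same E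
  rwa [Matrix.conjTranspose_eq_transpose_of_trivial] at this

lemma psd_symm {M : Mat} (hM : M.PosSemidef) : Mᵀ = M := by
  have := hM.isHermitian
  rwa [Matrix.IsHermitian, Matrix.conjTranspose_eq_transpose_of_trivial] at this

lemma psd_smul {M : Mat} (hM : M.PosSemidef) {c : ℝ} (hc : 0 ≤ c) : (c • M).PosSemidef := by
  refine ⟨?_, fun x => ?_⟩
  · rw [Matrix.IsHermitian, Matrix.conjTranspose_smul, star_trivial, hM.isHermitian.eq]
  · exact (hM.smul hc).2 x

open scoped MatrixOrder in
lemma psdL_unit {P N : Mat} (hP : P.PosSemidef) (hN : N.PosSemidef) : IsUnit (1 + N * P) := by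
  have hs : CFC.sqrt P * CFC.sqrt P = P := CFC.sqrt_mul_sqrt_self P hP.nonneg
  set s := CFC.sqrt P with hsdef
  have hsh : sᵀ = s := psd_symm (CFC.sqrt_nonneg P).posSemidef
  have hsNs : (s * N * s).PosSemidef := by
    have := conjPSD hN s; rwa [hsh] at this
  have hD : (1 + s * N * s).PosDef := Matrix.PosDef.one.add_posSemidef hsNs
  have hdet : (1 + N * P).det = (1 + s * N * s).det := by
    rw [← hs, show N * (s * s) = (N * s) * s by noncomm_ring,
      Matrix.det_one_add_mul_comm]
    congr 1
    noncomm_ring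
  rw [Matrix.isUnit_iff_isUnit_det, hdet]
  exact hD.det_pos.ne'.isUnit

open scoped MatrixOrder in
lemma psdL {P N : Mat} (hP : P.PosSemidef) (hN : N.PosSemidef) :
    (P * (1 + N * P)⁻¹).PosSemidef := by
  have hs : CFC.sqrt P * CFC.sqrt P = P := CFC.sqrt_mul_sqrt_self P hP.nonneg
  set s := CFC.sqrt P with hsdef
  have hsh : sᵀ = s := psd_symm (CFC.sqrt_nonneg P).posSemidef
  have hsNs : (s * N * s).PosSemidef := by
    have := conjPSD hN s; rwa [hsh] at this
  have hD : (1 + s * N * s).PosDef := Matrix.PosDef.one.add_posSemidef hsNs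
  have hDu : IsUnit (1 + s * N * s) := hD.isUnit
  have hBu : IsUnit (1 + N * P) := psdL_unit hP hN
  have h1 : (1 + s * N * s) * s = s * (1 + N * P) := by
    rw [← hs]; noncomm_ring
  have h2 : s * (1 + N * P)⁻¹ = (1 + s * N * s)⁻¹ * s := by
    have l1 : (1 + s * N * s) * (s * (1 + N * P)⁻¹) = s := by
      rw [← Matrix.mul_assoc, h1, Matrix.mul_assoc, mymul_inv hBu, Matrix.mul_one]
    have l2 : (1 + s * N * s) * ((1 + s * N * s)⁻¹ * s) = s := by
      rw [← Matrix.mul_assoc, mymul_inv hDu, Matrix.one_mul]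
    exact mycancel_left hDu (l1.trans l2.symm)
  have hkey : P * (1 + N * P)⁻¹ = s * (1 + s * N * s)⁻¹ * s := by
    nth_rewrite 1 [← hs]
    rw [Matrix.mul_assoc, h2, ← Matrix.mul_assoc]
  rw [hkey]
  have h3 : ((1 + s * N * s)⁻¹).PosSemidef := hD.inv.posSemidef
  have := conjPSD h3 s
  rwa [hsh] at this

lemma inv_shift {P N : Mat} (h1 : IsUnit (1 + P * N)) (h2 : IsUnit (1 + N * P)) :
    (1 + P * N)⁻¹ * P = P * (1 + N * P)⁻¹ := by
  have h0 : P * (1 + N * P) = (1 + P * N) * P := by noncomm_ring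
  have l1 : (1 + P * N) * ((1 + P * N)⁻¹ * P) = P := by
    rw [← Matrix.mul_assoc, mymul_inv h1, Matrix.one_mul]
  have l2 : (1 + P * N) * (P * (1 + N * P)⁻¹) = P := by
    rw [← Matrix.mul_assoc, ← h0, Matrix.mul_assoc, mymul_inv h2, Matrix.mul_one]
  exact mycancel_left h1 (l1.trans l2.symm)

lemma adda_base (A G Q X Y Aα Uα Vα R S CRm CSm A0 Y0 : Mat) (α : ℝ) (hα : 0 < α)
    (hGpsd : G.PosSemidef) (hQpsd : Q.PosSemidef)
    (hAα : Aα = A - α • 1)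
    (hUα : Uα = Aαᵀ + Q * Aα⁻¹ * G) (hVα : Vα = Aα + G * (Aαᵀ)⁻¹ * Q)
    (hAαu : IsUnit Aα) (hUαu : IsUnit Uα) (hVαu : IsUnit Vα)
    (hCARE : Aᵀ * X + X * A + Q - X * G * X = 0)
    (hDUAL : A * Y + Y * Aᵀ - Y * Q * Y + G = 0)
    (hR : R = A - G * X) (hS : S = Aᵀ - Q * Y)
    (hRu : IsUnit (R - α • 1)) (hSu : IsUnit (S - α • 1))
    (hCR : CRm = (R + α • 1) * (R - α • 1)⁻¹) (hCS : CSm = (S + α • 1) * (S - α • 1)⁻¹)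
    (hA0 : A0 = 1 + (2 * α) • Vα⁻¹) (hY0 : Y0 = (2 * α) • (Aα⁻¹ * G * Uα⁻¹)) :
    Y0.PosSemidef ∧ A0 = (1 + Y0 * X) * CRm ∧ Y - Y0 = A0 * Y * CSm := by
  have hAαTu : IsUnit (Aαᵀ) := by
    rw [Matrix.isUnit_iff_isUnit_det, Matrix.det_transpose]
    exact (Matrix.isUnit_iff_isUnit_det Aα).mp hAαu
  set P : Mat := (Aαᵀ)⁻¹ with hPdef
  have hpa : ∀ M : Mat, P * (Aαᵀ * M) = M := fun M => by
    rw [← Matrix.mul_assoc, myinv_mul hAαTu, Matrix.one_mul]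
  have hap : ∀ M : Mat, Aαᵀ * (P * M) = M := fun M => by
    rw [← Matrix.mul_assoc, mymul_inv hAαTu, Matrix.one_mul]
  have haa : ∀ M : Mat, Aα * (Aα⁻¹ * M) = M := fun M => by
    rw [← Matrix.mul_assoc, mymul_inv hAαu, Matrix.one_mul]
  have hA : A = Aα + α • 1 := by rw [hAα, sub_add_cancel]
  -- Y0 positive semidefinite
  have hT : ((Aα⁻¹)ᵀ * Q * Aα⁻¹).PosSemidef := transPSD hQpsd Aα⁻¹
  have hTP : (P * Q * Aα⁻¹).PosSemidef := by
    rwa [hPdef, ← Matrix.transpose_nonsing_inv]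
  have hUfact : Uα = Aαᵀ * (1 + P * Q * Aα⁻¹ * G) := by
    rw [hUα, Matrix.mul_add, Matrix.mul_one]
    congr 1
    rw [show P * Q * Aα⁻¹ * G = P * (Q * Aα⁻¹ * G) by
      simp only [Matrix.mul_assoc], hap]
  have hUinv : Uα⁻¹ = (1 + P * Q * Aα⁻¹ * G)⁻¹ * P := by
    rw [hUfact, Matrix.mul_inv_rev]
  have hY0psd : Y0.PosSemidef := by
    have hinner : (G * (1 + P * Q * Aα⁻¹ * G)⁻¹).PosSemidef := psdL hGpsd hTP
    have hconj : (Aα⁻¹ * (G * (1 + P * Q * Aα⁻¹ * G)⁻¹) * (Aα⁻¹)ᵀ).PosSemidef :=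
      conjPSD hinner Aα⁻¹
    have heq : Aα⁻¹ * G * Uα⁻¹ = Aα⁻¹ * (G * (1 + P * Q * Aα⁻¹ * G)⁻¹) * (Aα⁻¹)ᵀ := by
      rw [hUinv, hPdef, ← Matrix.transpose_nonsing_inv]
      simp only [Matrix.mul_assoc]
    rw [hY0, heq]
    exact psd_smul hconj (by positivity)
  have hpa1 : P * Aαᵀ = 1 := myinv_mul hAαTu
  have k0 : Vα * (Aα⁻¹ * G) = G * (P * Uα) := by
    rw [hVα, hUα]
    simp only [add_mul, mul_add, Matrix.mul_assoc, haa, hpa, hpa1, Matrix.mul_one]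
  have hVY0 : Vα * Y0 = (2 * α) • (G * P) := by
    rw [hY0, mul_smul_comm]
    congr 1
    calc Vα * (Aα⁻¹ * G * Uα⁻¹) = Vα * (Aα⁻¹ * G) * Uα⁻¹ := by simp only [Matrix.mul_assoc]
    _ = G * (P * Uα) * Uα⁻¹ := by rw [k0]
    _ = G * P := by
        simp only [Matrix.mul_assoc, mymul_inv hUαu, Matrix.mul_one]
  have hCARE' : Aαᵀ * X + X * Aα + (2 * α) • X + Q - X * (G * X) = 0 := by
    have h0 : Aαᵀ * X + X * Aα + (2 * α) • X + Q - X * (G * X)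
        = Aᵀ * X + X * A + Q - X * G * X := by
      rw [hAα]
      simp only [Matrix.transpose_sub, Matrix.transpose_smul, Matrix.transpose_one,
        sub_mul, mul_sub, smul_mul_assoc, mul_smul_comm, one_mul, mul_one, Matrix.mul_assoc]
      module
    rw [h0, hCARE]
  refine ⟨hY0psd, ?_, ?_⟩
  · -- c1
    refine mycancel_left hVαu (mycancel_right hRu ?_)
    have lhs1 : Vα * A0 * (R - α • 1) = (Vα + (2*α) • 1) * (R - α • 1) := by
      rw [hA0, mul_add, mul_one, mul_smul_comm, mymul_inv hVαu]
    have rhs1 : Vα * ((1 + Y0 * X) * CRm) * (R - α • 1)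
        = (Vα + (2*α) • (G * (P * X))) * (R + α • 1) := by
      rw [hCR]
      calc Vα * ((1 + Y0 * X) * ((R + α•1) * (R - α•1)⁻¹)) * (R - α•1)
          = (Vα * (1 + Y0*X)) * ((R + α•1) * ((R - α•1)⁻¹ * (R - α•1))) := by
            simp only [Matrix.mul_assoc]
        _ = (Vα + (2*α) • (G * (P * X))) * (R + α•1) := by
            have hv1 : Vα * (1 + Y0 * X) = Vα + (2*α) • (G * (P * X)) := by
              rw [mul_add, mul_one, ← Matrix.mul_assoc, hVY0, smul_mul_assoc,
                Matrix.mul_assoc]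
            rw [myinv_mul hRu, Matrix.mul_one, hv1]
    rw [lhs1, rhs1]
    have expand : (Vα + (2*α) • (1:Mat)) * (R - α • 1)
        + (2*α) • (G * (P * (Aαᵀ * X + X * Aα + (2 * α) • X + Q - X * (G * X))))
        = (Vα + (2*α) • (G * (P * X))) * (R + α • 1) := by
      rw [hVα, hR, hA]
      simp only [add_mul, mul_add, sub_mul, mul_sub, smul_add, smul_sub, smul_smul,
        smul_mul_assoc, mul_smul_comm, Matrix.mul_assoc, Matrix.mul_one, Matrix.one_mul,
        hpa, hpa1]
      module
    rw [hCARE'] at expand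
    simpa using expand
  · -- c4
    refine mycancel_left hVαu (mycancel_right hSu ?_)
    have lhs1 : Vα * (Y - Y0) * (S - α • 1) = (Vα * Y - (2*α) • (G * P)) * (S - α • 1) := by
      rw [mul_sub Vα Y Y0, hVY0]
    have rhs1 : Vα * (A0 * Y * CSm) * (S - α • 1) = (Vα + (2*α) • 1) * Y * (S + α • 1) := by
      rw [hCS]
      calc Vα * (A0 * Y * ((S + α•1) * (S - α•1)⁻¹)) * (S - α•1)
          = (Vα * A0) * (Y * ((S + α•1) * ((S - α•1)⁻¹ * (S - α•1)))) := by
            simp only [Matrix.mul_assoc]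
        _ = (Vα + (2*α) • 1) * Y * (S + α•1) := by
            rw [myinv_mul hSu, Matrix.mul_one, hA0, mul_add, mul_one, mul_smul_comm,
              mymul_inv hVαu, Matrix.mul_assoc]
    rw [lhs1, rhs1]
    have expand : (Vα * Y - (2*α) • (G * P)) * (S - α • 1)
        + (2*α) • (A * Y + Y * Aᵀ - Y * Q * Y + G)
        = (Vα + (2*α) • (1:Mat)) * Y * (S + α • 1) := by
      rw [hVα, hS, hA]
      simp only [Matrix.transpose_add, Matrix.transpose_smul, Matrix.transpose_one,
        add_mul, mul_add, sub_mul, mul_sub, smul_add, smul_sub, smul_smul,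
        smul_mul_assoc, mul_smul_comm, Matrix.mul_assoc, Matrix.mul_one, Matrix.one_mul,
        hpa, hpa1]
      module
    rw [hDUAL] at expand
    simpa using expand

lemma adda_stepA (E A' Xk Yk Yk1 X CRe : Mat)
    (hu1 : IsUnit (1 + Yk * Xk)) (hu2 : IsUnit (1 + Xk * Yk))
    (h1 : E = (1 + Yk * X) * CRe) (h2 : Eᵀ * X * CRe = X - Xk)
    (hY1 : Yk1 = Yk + E * Yk * (1 + Xk * Yk)⁻¹ * Eᵀ)
    (hA' : A' = E * (1 + Yk * Xk)⁻¹ * E) :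
    A' = (1 + Yk1 * X) * (CRe * CRe) := by
  have e1 : (1 + Yk * Xk) * Yk = Yk * (1 + Xk * Yk) := by noncomm_ring
  have hcc : ∀ M : Mat, (1 + Xk * Yk) * ((1 + Xk * Yk)⁻¹ * M) = M := fun M => by
    rw [← Matrix.mul_assoc, mymul_inv hu2, Matrix.one_mul]
  have hz : (1 + Yk * Xk)⁻¹ * (1 + Yk * X)
      = 1 + Yk * ((1 + Xk * Yk)⁻¹ * (X - Xk)) := by
    refine mycancel_left hu1 ?_
    rw [← Matrix.mul_assoc, mymul_inv hu1, Matrix.one_mul, mul_add, Matrix.mul_one,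
      ← Matrix.mul_assoc (1 + Yk * Xk) Yk _, e1, Matrix.mul_assoc, hcc]
    noncomm_ring
  have hz' : (1 + Yk * Xk)⁻¹ * ((1 + Yk * X) * CRe)
      = (1 + Yk * ((1 + Xk * Yk)⁻¹ * (X - Xk))) * CRe := by
    rw [← Matrix.mul_assoc, hz]
  have hxx : ∀ M : Mat, Eᵀ * (X * (CRe * M)) = (X - Xk) * M := fun M => by
    rw [← Matrix.mul_assoc, ← Matrix.mul_assoc, h2]
  rw [hA', Matrix.mul_assoc]
  nth_rewrite 2 [h1]
  rw [hz', hY1]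
  simp only [add_mul, mul_add, Matrix.mul_one, Matrix.one_mul, Matrix.mul_assoc, hxx]
  simp only [h1, add_mul, mul_add, Matrix.mul_assoc, Matrix.one_mul, Matrix.mul_one]
  abel

lemma adda_stepB (E A' Xk Yk Yk1 Y CSe : Mat)
    (hu1 : IsUnit (1 + Yk * Xk)) (hu2 : IsUnit (1 + Xk * Yk))
    (h3 : Eᵀ = (1 + Xk * Y) * CSe) (h4 : Y - Yk = E * Y * CSe)
    (hY1 : Yk1 = Yk + E * Yk * (1 + Xk * Yk)⁻¹ * Eᵀ)
    (hA' : A' = E * (1 + Yk * Xk)⁻¹ * E) :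
    Y - Yk1 = A' * Y * (CSe * CSe) := by
  have e1 : (1 + Yk * Xk) * Yk = Yk * (1 + Xk * Yk) := by noncomm_ring
  have hcc : ∀ M : Mat, (1 + Xk * Yk) * ((1 + Xk * Yk)⁻¹ * M) = M := fun M => by
    rw [← Matrix.mul_assoc, mymul_inv hu2, Matrix.one_mul]
  have hz2 : (1 + Yk * Xk)⁻¹ * (Y - Yk)
      = Y - Yk * ((1 + Xk * Yk)⁻¹ * (1 + Xk * Y)) := by
    refine mycancel_left hu1 ?_
    rw [← Matrix.mul_assoc, mymul_inv hu1, Matrix.one_mul, mul_sub,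
      ← Matrix.mul_assoc (1 + Yk * Xk) Yk _, e1, Matrix.mul_assoc, hcc]
    noncomm_ring
  have step1 : Y - Yk1
      = E * ((Y - Yk * ((1 + Xk * Yk)⁻¹ * (1 + Xk * Y))) * CSe) := by
    rw [hY1, h3]
    have h4' : Y - Yk = E * (Y * CSe) := by rw [h4, Matrix.mul_assoc]
    calc Y - (Yk + E * Yk * (1 + Xk * Yk)⁻¹ * ((1 + Xk * Y) * CSe))
        = (Y - Yk) - E * (Yk * ((1 + Xk * Yk)⁻¹ * ((1 + Xk * Y) * CSe))) := by
          simp only [Matrix.mul_assoc]; abel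
      _ = E * (Y * CSe) - E * (Yk * ((1 + Xk * Yk)⁻¹ * ((1 + Xk * Y) * CSe))) := by
          rw [h4']
      _ = E * ((Y - Yk * ((1 + Xk * Yk)⁻¹ * (1 + Xk * Y))) * CSe) := by
          simp only [sub_mul, mul_sub, Matrix.mul_assoc]
  rw [step1, ← hz2, hA']
  have h4' : Y - Yk = E * (Y * CSe) := by rw [h4, Matrix.mul_assoc]
  rw [h4']
  simp only [Matrix.mul_assoc]
-- appended part: derived lemmas + main theorem
lemma myunitT {A : Mat} (hA : IsUnit A) : IsUnit Aᵀ := by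
  rw [Matrix.isUnit_iff_isUnit_det, Matrix.det_transpose]
  exact (Matrix.isUnit_iff_isUnit_det A).mp hA

lemma dY_psd (E Xk Yk Y CSe : Mat) (hY : Y.PosSemidef) (hXk : Xk.PosSemidef)
    (i3 : Eᵀ = (1 + Xk * Y) * CSe) (i4 : Y - Yk = E * Y * CSe) :
    (Y - Yk).PosSemidef := by
  have hu3 : IsUnit (1 + Xk * Y) := psdL_unit hY hXk
  have hCSe : CSe = (1 + Xk * Y)⁻¹ * Eᵀ := by
    rw [i3, ← Matrix.mul_assoc, myinv_mul hu3, Matrix.one_mul]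
  have heq : Y - Yk = E * (Y * (1 + Xk * Y)⁻¹) * Eᵀ := by
    rw [i4, hCSe]; simp only [Matrix.mul_assoc]
  rw [heq]; exact conjPSD (psdL hY hXk) E

lemma dBound (E Xk Yk X Y CRe CSe : Mat) (hX : X.PosSemidef) (hYk : Yk.PosSemidef)
    (hY : Y.PosSemidef)
    (i1 : E = (1 + Yk * X) * CRe) (i4 : Y - Yk = E * Y * CSe) :
    ((1 + Y * X) * CRe * Y * CSe - (Y - Yk)).PosSemidef := by
  have hu4 : IsUnit (1 + Yk * X) := psdL_unit hX hYk
  have hD : (1 + Yk * X) * (CRe * (Y * CSe)) = Y - Yk := by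
    calc (1 + Yk * X) * (CRe * (Y * CSe)) = ((1 + Yk * X) * CRe) * (Y * CSe) := by
          rw [Matrix.mul_assoc]
    _ = E * (Y * CSe) := by rw [← i1]
    _ = Y - Yk := by rw [← Matrix.mul_assoc, ← i4]
  have hCRY : CRe * (Y * CSe) = (1 + Yk * X)⁻¹ * (Y - Yk) := by
    refine mycancel_left hu4 ?_
    rw [hD, ← Matrix.mul_assoc, mymul_inv hu4, Matrix.one_mul]
  have hmain : (1 + Y * X) * CRe * Y * CSe
      = (Y - Yk) + (Y - Yk) * (X * (1 + Yk * X)⁻¹) * (Y - Yk) := by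
    calc (1 + Y * X) * CRe * Y * CSe = (1 + Y * X) * (CRe * (Y * CSe)) := by
          simp only [Matrix.mul_assoc]
    _ = (1 + Y * X) * ((1 + Yk * X)⁻¹ * (Y - Yk)) := by rw [hCRY]
    _ = ((1 + Yk * X) + (Y - Yk) * X) * ((1 + Yk * X)⁻¹ * (Y - Yk)) := by
          congr 1; noncomm_ring
    _ = (1 + Yk * X) * ((1 + Yk * X)⁻¹ * (Y - Yk))
          + (Y - Yk) * (X * ((1 + Yk * X)⁻¹ * (Y - Yk))) := by
          rw [add_mul, Matrix.mul_assoc]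
    _ = (Y - Yk) + (Y - Yk) * (X * (1 + Yk * X)⁻¹) * (Y - Yk) := by
          rw [← Matrix.mul_assoc (1 + Yk * X) _ _, mymul_inv hu4, Matrix.one_mul]
          simp only [Matrix.mul_assoc]
  rw [hmain, add_sub_cancel_left]
  have hDsym : (Y - Yk)ᵀ = Y - Yk := by
    rw [Matrix.transpose_sub, psd_symm hY, psd_symm hYk]
  have := conjPSD (psdL hX hYk) (Y - Yk)
  rwa [hDsym] at this

theorem stmt_8 (n m p : ℕ)
    (A G Q : Matrix (Fin n) (Fin n) ℝ)
    (B : Matrix (Fin n) (Fin m) ℝ) (C : Matrix (Fin p) (Fin n) ℝ)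
    (hG : G = B * Bᵀ) (hQ : Q = Cᵀ * C)
    (α : ℝ) (hα : 0 < α)
    (Aα Uα Vα : Matrix (Fin n) (Fin n) ℝ)
    (hAα : Aα = A - α • 1)
    (hUα : Uα = Aαᵀ + Q * Aα⁻¹ * G)
    (hVα : Vα = Aα + G * (Aαᵀ)⁻¹ * Q)
    (hAαu : IsUnit Aα) (hUαu : IsUnit Uα) (hVαu : IsUnit Vα)
    (X Y : Matrix (Fin n) (Fin n) ℝ)
    (hXpsd : X.PosSemidef) (hYpsd : Y.PosSemidef)
    (hCARE : Aᵀ * X + X * A + Q - X * G * X = 0)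
    (hDUAL : A * Y + Y * Aᵀ - Y * Q * Y + G = 0)
    (R S : Matrix (Fin n) (Fin n) ℝ)
    (hR : R = A - G * X) (hS : S = Aᵀ - Q * Y)
    (hRu : IsUnit (R - α • 1)) (hSu : IsUnit (S - α • 1))
    (CR CS : Matrix (Fin n) (Fin n) ℝ)
    (hCR : CR = (R + α • 1) * (R - α • 1)⁻¹)
    (hCS : CS = (S + α • 1) * (S - α • 1)⁻¹)
    (Ahat Xs Ys : ℕ → Matrix (Fin n) (Fin n) ℝ)
    (hA0 : Ahat 0 = 1 + (2 * α) • Vα⁻¹)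
    (hX0 : Xs 0 = (2 * α) • (Uα⁻¹ * Q * Aα⁻¹))
    (hY0 : Ys 0 = (2 * α) • (Aα⁻¹ * G * Uα⁻¹))
    (hu1 : ∀ k, IsUnit (1 + Ys k * Xs k))
    (hu2 : ∀ k, IsUnit (1 + Xs k * Ys k))
    (hArec : ∀ k, Ahat (k + 1) = Ahat k * (1 + Ys k * Xs k)⁻¹ * Ahat k)
    (hXrec : ∀ k, Xs (k + 1) = Xs k + (Ahat k)ᵀ * (1 + Xs k * Ys k)⁻¹ * Xs k * Ahat k)
    (hYrec : ∀ k, Ys (k + 1) = Ys k + Ahat k * Ys k * (1 + Xs k * Ys k)⁻¹ * (Ahat k)ᵀ) :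
    ∀ k, (Ys k).PosSemidef ∧ (Ys (k + 1) - Ys k).PosSemidef ∧
      (Y - Ys (k + 1)).PosSemidef ∧ (Y - Ys k).PosSemidef ∧
      ((1 + Y * X) * CR ^ (2 ^ k) * Y * CS ^ (2 ^ k) - (Y - Ys k)).PosSemidef := by
  have hGpsd : G.PosSemidef := by
    rw [hG, ← Matrix.conjTranspose_eq_transpose_of_trivial]
    exact Matrix.posSemidef_self_mul_conjTranspose B
  have hQpsd : Q.PosSemidef := by
    rw [hQ, ← Matrix.conjTranspose_eq_transpose_of_trivial]
    exact Matrix.posSemidef_conjTranspose_mul_self C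
  have hGs : Gᵀ = G := psd_symm hGpsd
  have hQs : Qᵀ = Q := psd_symm hQpsd
  have hAαTu : IsUnit Aαᵀ := myunitT hAαu
  have hVαT : Vαᵀ = Uα := by
    rw [hVα, hUα]
    simp only [Matrix.transpose_add, Matrix.transpose_mul, Matrix.transpose_transpose,
      Matrix.transpose_nonsing_inv, hGs, hQs, Matrix.mul_assoc]
  have hA0T : (Ahat 0)ᵀ = 1 + (2 * α) • Uα⁻¹ := by
    rw [hA0]
    simp only [Matrix.transpose_add, Matrix.transpose_smul, Matrix.transpose_one,
      Matrix.transpose_nonsing_inv, hVαT]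
  have haap : ∀ M : Matrix (Fin n) (Fin n) ℝ, Aαᵀ * ((Aαᵀ)⁻¹ * M) = M := fun M => by
    rw [← Matrix.mul_assoc, mymul_inv hAαTu, Matrix.one_mul]
  have keyQ : Q * Aα⁻¹ * Vα = Uα * ((Aαᵀ)⁻¹ * Q) := by
    rw [hVα, hUα]
    simp only [add_mul, mul_add, Matrix.mul_assoc, myinv_mul hAαu, Matrix.mul_one, haap]
  have hX0' : Xs 0 = (2 * α) • ((Aαᵀ)⁻¹ * Q * Vα⁻¹) := by
    rw [hX0]; congr 1
    refine mycancel_left hUαu (mycancel_right hVαu ?_)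
    have l1 : Uα * (Uα⁻¹ * Q * Aα⁻¹) * Vα = Q * Aα⁻¹ * Vα := by
      rw [← Matrix.mul_assoc, ← Matrix.mul_assoc, mymul_inv hUαu, Matrix.one_mul]
    have l2 : Uα * ((Aαᵀ)⁻¹ * Q * Vα⁻¹) * Vα = Uα * ((Aαᵀ)⁻¹ * Q) := by
      simp only [Matrix.mul_assoc, myinv_mul hVαu, Matrix.mul_one]
    rw [l1, l2, keyQ]
  obtain ⟨hY0psd, i1_0, i4_0⟩ := adda_base A G Q X Y Aα Uα Vα R S CR CS (Ahat 0) (Ys 0)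
    α hα hGpsd hQpsd hAα hUα hVα hAαu hUαu hVαu hCARE hDUAL hR hS hRu hSu hCR hCS hA0 hY0
  have hCARE2 : (Aᵀ)ᵀ * Y + Y * Aᵀ + G - Y * Q * Y = 0 := by
    rw [Matrix.transpose_transpose]
    calc A * Y + Y * Aᵀ + G - Y * Q * Y = A * Y + Y * Aᵀ - Y * Q * Y + G := by abel
    _ = 0 := hDUAL
  have hDUAL2 : Aᵀ * X + X * (Aᵀ)ᵀ - X * G * X + Q = 0 := by
    rw [Matrix.transpose_transpose]
    calc Aᵀ * X + X * A - X * G * X + Q = Aᵀ * X + X * A + Q - X * G * X := by abel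
    _ = 0 := hCARE
  have hAα2 : Aαᵀ = Aᵀ - α • 1 := by
    rw [hAα]
    simp only [Matrix.transpose_sub, Matrix.transpose_smul, Matrix.transpose_one]
  have hUα2 : Vα = (Aαᵀ)ᵀ + G * Aαᵀ⁻¹ * Q := by rw [Matrix.transpose_transpose]; exact hVα
  have hVα2 : Uα = Aαᵀ + Q * ((Aαᵀ)ᵀ)⁻¹ * G := by rw [Matrix.transpose_transpose]; exact hUα
  have hS2 : R = (Aᵀ)ᵀ - G * X := by rw [Matrix.transpose_transpose]; exact hR
  obtain ⟨hX0psd, i3_0, i2_0⟩ := adda_base Aᵀ Q G Y X Aαᵀ Vα Uα S R CS CR ((Ahat 0)ᵀ) (Xs 0)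
    α hα hQpsd hGpsd hAα2 hUα2 hVα2 hAαTu hVαu hUαu hCARE2 hDUAL2 hS hS2 hSu hRu hCS hCR
    hA0T hX0'
  have inv : ∀ k, (Xs k).PosSemidef ∧ (Ys k).PosSemidef ∧
      Ahat k = (1 + Ys k * X) * CR ^ (2 ^ k) ∧
      (Ahat k)ᵀ = (1 + Xs k * Y) * CS ^ (2 ^ k) ∧
      (Ahat k)ᵀ * X * CR ^ (2 ^ k) = X - Xs k ∧
      Y - Ys k = Ahat k * Y * CS ^ (2 ^ k) := by
    intro k
    induction k with
    | zero =>
      refine ⟨hX0psd, hY0psd, ?_, ?_, ?_, ?_⟩ <;> simp only [pow_zero, pow_one]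
      exacts [i1_0, i3_0, i2_0.symm, i4_0]
    | succ k ih =>
      obtain ⟨hXk, hYk, i1, i3, i2, i4⟩ := ih
      have hXsym := psd_symm hXk
      have hYsym := psd_symm hYk
      have hATrec : (Ahat (k + 1))ᵀ = (Ahat k)ᵀ * (1 + Xs k * Ys k)⁻¹ * (Ahat k)ᵀ := by
        rw [hArec k]
        simp only [Matrix.transpose_mul, Matrix.transpose_nonsing_inv, Matrix.transpose_add,
          Matrix.transpose_one, hXsym, hYsym, Matrix.mul_assoc]
      have hXrec' : Xs (k + 1) = Xs k + (Ahat k)ᵀ * Xs k * (1 + Ys k * Xs k)⁻¹ * Ahat k := by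
        rw [hXrec k]
        congr 1
        rw [Matrix.mul_assoc ((Ahat k)ᵀ) ((1 + Xs k * Ys k)⁻¹) (Xs k),
          inv_shift (hu2 k) (hu1 k), ← Matrix.mul_assoc]
      have hXk1 : (Xs (k + 1)).PosSemidef := by
        rw [hXrec']
        refine hXk.add ?_
        have h := transPSD (psdL hXk hYk) (Ahat k)
        rwa [← Matrix.mul_assoc] at h
      have hdiffpsd : (Ahat k * Ys k * (1 + Xs k * Ys k)⁻¹ * (Ahat k)ᵀ).PosSemidef := by
        have h := conjPSD (psdL hYk hXk) (Ahat k)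
        rwa [← Matrix.mul_assoc] at h
      have hYk1 : (Ys (k + 1)).PosSemidef := by rw [hYrec k]; exact hYk.add hdiffpsd
      have hpow : ∀ M : Matrix (Fin n) (Fin n) ℝ, M ^ (2 ^ k) * M ^ (2 ^ k) = M ^ (2 ^ (k + 1)) :=
        fun M => by rw [← pow_add]; congr 1; ring
      have i1' : Ahat (k + 1) = (1 + Ys (k + 1) * X) * CR ^ (2 ^ (k + 1)) := by
        have h := adda_stepA (Ahat k) (Ahat (k + 1)) (Xs k) (Ys k) (Ys (k + 1)) X
          (CR ^ (2 ^ k)) (hu1 k) (hu2 k) i1 i2 (hYrec k) (hArec k)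
        rwa [hpow] at h
      have h2s : ((Ahat k)ᵀ)ᵀ * Y * CS ^ (2 ^ k) = Y - Ys k := by
        rw [Matrix.transpose_transpose]; exact i4.symm
      have hY1s : Xs (k + 1) = Xs k + (Ahat k)ᵀ * Xs k * (1 + Ys k * Xs k)⁻¹ * ((Ahat k)ᵀ)ᵀ := by
        rw [Matrix.transpose_transpose]; exact hXrec'
      have i3' : (Ahat (k + 1))ᵀ = (1 + Xs (k + 1) * Y) * CS ^ (2 ^ (k + 1)) := by
        have h := adda_stepA ((Ahat k)ᵀ) ((Ahat (k + 1))ᵀ) (Ys k) (Xs k) (Xs (k + 1)) Y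
          (CS ^ (2 ^ k)) (hu2 k) (hu1 k) i3 h2s hY1s hATrec
        rwa [hpow] at h
      have i4' : Y - Ys (k + 1) = Ahat (k + 1) * Y * CS ^ (2 ^ (k + 1)) := by
        have h := adda_stepB (Ahat k) (Ahat (k + 1)) (Xs k) (Ys k) (Ys (k + 1)) Y
          (CS ^ (2 ^ k)) (hu1 k) (hu2 k) i3 i4 (hYrec k) (hArec k)
        rwa [hpow] at h
      have i2' : (Ahat (k + 1))ᵀ * X * CR ^ (2 ^ (k + 1)) = X - Xs (k + 1) := by
        have h3s : ((Ahat k)ᵀ)ᵀ = (1 + Ys k * X) * CR ^ (2 ^ k) := by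
          rw [Matrix.transpose_transpose]; exact i1
        have h := adda_stepB ((Ahat k)ᵀ) ((Ahat (k + 1))ᵀ) (Ys k) (Xs k) (Xs (k + 1)) X
          (CR ^ (2 ^ k)) (hu2 k) (hu1 k) h3s i2.symm hY1s hATrec
        rw [hpow] at h
        exact h.symm
      exact ⟨hXk1, hYk1, i1', i3', i2', i4'⟩
  intro k
  obtain ⟨hXk, hYk, i1, i3, i2, i4⟩ := inv k
  obtain ⟨hXk1, hYk1, j1, j3, j2, j4⟩ := inv (k + 1)
  refine ⟨hYk, ?_, ?_, ?_, ?_⟩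
  · rw [hYrec k, add_sub_cancel_left]
    have h := conjPSD (psdL hYk hXk) (Ahat k)
    rwa [← Matrix.mul_assoc] at h
  · exact dY_psd (Ahat (k + 1)) (Xs (k + 1)) (Ys (k + 1)) Y (CS ^ (2 ^ (k + 1))) hYpsd hXk1 j3 j4
  · exact dY_psd (Ahat k) (Xs k) (Ys k) Y (CS ^ (2 ^ k)) hYpsd hXk i3 i4
  · exact dBound (Ahat k) (Xs k) (Ys k) X Y (CR ^ (2 ^ k)) (CS ^ (2 ^ k)) hXpsd hYk hYpsd i1 i4
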